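/- Let A ∈ ℝ^{n×n} be diagonalizable over ℂ with all eigenvalues of modulus 1, let B ∈ ℝ^{n×m} with (A,B) reachable, let X ∈ ℝ^{n×n} be symmetric positive definite with X = AᵀXA and I_m − BᵀXB positive semidefinite, and set F = BᵀXA. Then for every z ∈ ℂ with |z| > 1, the matrix zI − A + BF is invertible and, with T_F(z) = F(zI − A + BF)^{−1}B, the Hermitian matrix I_m − T_F(z)* T_F(z) is positive semidefinite. In other words, the H∞ norm of the closed-loop transfer matrix T_F(z) is at most 1. -/

import Mathlib

open Matrix
open scoped ComplexOrder


lemma mapCT {p q : ℕ} (M : Matrix (Fin p) (Fin q) ℝ) :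
    (M.map Complex.ofReal)ᴴ = Mᵀ.map Complex.ofReal := by
  ext i j
  simp [Matrix.conjTranspose_apply, Matrix.map_apply]

lemma mapMul {p q r : ℕ} (M : Matrix (Fin p) (Fin q) ℝ) (N : Matrix (Fin q) (Fin r) ℝ) :
    (M * N).map Complex.ofReal = M.map Complex.ofReal * N.map Complex.ofReal := by
  ext i j
  simp [Matrix.mul_apply, Matrix.map_apply]

lemma realCT {p q : ℕ} (M : Matrix (Fin p) (Fin q) ℝ) : Mᴴ = Mᵀ := by
  ext i j; simp [Matrix.conjTranspose_apply]

lemma psdMap {k : ℕ} {M : Matrix (Fin k) (Fin k) ℝ} (h : M.PosSemidef) :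
    (M.map Complex.ofReal).PosSemidef := by
  obtain ⟨C, hC⟩ : ∃ C : Matrix (Fin k) (Fin k) ℝ, M = Cᴴ * C := by
    open scoped MatrixOrder in
    refine ⟨CFC.sqrt M, ?_⟩
    have hs : (CFC.sqrt M)ᴴ = CFC.sqrt M := by
      exact (IsSelfAdjoint.of_nonneg (CFC.sqrt_nonneg M)).star_eq
    rw [hs, CFC.sqrt_mul_sqrt_self M h.nonneg]
  have h2 : M.map Complex.ofReal = (C.map Complex.ofReal)ᴴ * (C.map Complex.ofReal) := by
    rw [hC, mapMul, realCT, ← mapCT]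
  rw [h2]
  exact Matrix.posSemidef_conjTranspose_mul_self _

lemma pdMap {k : ℕ} {M : Matrix (Fin k) (Fin k) ℝ} (h : M.PosDef) :
    (M.map Complex.ofReal).PosDef := by
  have hpsd := psdMap h.posSemidef
  have hdet : (M.map Complex.ofReal).det ≠ 0 := by
    have : (M.map Complex.ofReal).det = (M.det : ℂ) := by
      rw [show M.map Complex.ofReal = Complex.ofRealHom.mapMatrix M from rfl,
        ← RingHom.map_det]; rfl
    rw [this]
    exact_mod_cast h.det_pos.ne'
  refine Matrix.PosDef.of_dotProduct_mulVec_pos hpsd.1 fun x hx => ?_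
  refine lt_of_le_of_ne (hpsd.dotProduct_mulVec_nonneg x) fun h0 => ?_
  exact hdet (Matrix.exists_mulVec_eq_zero_iff.mp
    ⟨x, hx, (hpsd.dotProduct_mulVec_zero_iff x).mp h0.symm⟩)

lemma psdSmul {k : ℕ} {M : Matrix (Fin k) (Fin k) ℂ} (h : M.PosSemidef) {c : ℂ}
    (hc : 0 ≤ c) : (c • M).PosSemidef := by
  obtain ⟨hre, him⟩ := Complex.nonneg_iff.mp hc
  refine Matrix.PosSemidef.of_dotProduct_mulVec_nonneg ?_ ?_
  · show (c • M)ᴴ = c • M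
    rw [Matrix.conjTranspose_smul, h.1]
    congr 1
    exact Complex.conj_eq_iff_im.mpr him.symm
  · intro x
    rw [Matrix.smul_mulVec, dotProduct_smul, smul_eq_mul]
    exact mul_nonneg hc (h.dotProduct_mulVec_nonneg x)

set_option maxHeartbeats 2000000 in
/-- Lemma 3: for the feedback gain `F = BᵀXA` of Lemma 2, the closed-loop
transfer matrix `T_F(z) = F(zI − A + BF)⁻¹B` satisfies
`I − T_F(z)* T_F(z) ⪰ 0` for all `|z| > 1`, i.e., `‖T_F‖_{H∞} ≤ 1`. -/
theorem stmt12 (n m : ℕ)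
    (A : Matrix (Fin n) (Fin n) ℝ) (B : Matrix (Fin n) (Fin m) ℝ)
    (hdiag : ∃ P : Matrix (Fin n) (Fin n) ℂ, IsUnit P ∧
      (P⁻¹ * A.map Complex.ofReal * P).IsDiag)
    (hspec : ∀ c ∈ spectrum ℂ (A.map Complex.ofReal), ‖c‖ = 1)
    (hreach : ∀ w : Fin n → ℝ, (∀ k : ℕ, Bᵀ *ᵥ ((Aᵀ) ^ k *ᵥ w) = 0) → w = 0)
    (X : Matrix (Fin n) (Fin n) ℝ) (hX : X.PosDef) (hXA : X = Aᵀ * X * A)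
    (hXB : ((1 : Matrix (Fin m) (Fin m) ℝ) - Bᵀ * X * B).PosSemidef)
    (F : Matrix (Fin m) (Fin n) ℝ) (hF : F = Bᵀ * X * A)
    (Ac : Matrix (Fin n) (Fin n) ℂ) (hAc : Ac = A.map Complex.ofReal)
    (Bc : Matrix (Fin n) (Fin m) ℂ) (hBc : Bc = B.map Complex.ofReal)
    (Fc : Matrix (Fin m) (Fin n) ℂ) (hFc : Fc = F.map Complex.ofReal) :
    ∀ z : ℂ, 1 < ‖z‖ →
      IsUnit (z • (1 : Matrix (Fin n) (Fin n) ℂ) - Ac + Bc * Fc) ∧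
      ((1 : Matrix (Fin m) (Fin m) ℂ) -
        (Fc * (z • (1 : Matrix (Fin n) (Fin n) ℂ) - Ac + Bc * Fc)⁻¹ * Bc)ᴴ *
        (Fc * (z • (1 : Matrix (Fin n) (Fin n) ℂ) - Ac + Bc * Fc)⁻¹ * Bc)).PosSemidef := by
  intro z hz
  set Xc : Matrix (Fin n) (Fin n) ℂ := X.map Complex.ofReal with hXcdef
  set Gc : Matrix (Fin m) (Fin m) ℂ := (Bᵀ * X * B).map Complex.ofReal with hGcdef
  have hXs : Xᵀ = X := by
    rw [← realCT]; exact hX.1.eq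
  -- basic complexified identities
  have f1 : Acᴴ * (Xc * Ac) = Xc := by
    rw [hAc, mapCT, hXcdef, ← mapMul, ← mapMul, ← Matrix.mul_assoc, ← hXA]
  have f2 : Bcᴴ * (Xc * Ac) = Fc := by
    rw [hBc, mapCT, hXcdef, hAc, hFc, ← mapMul, ← mapMul, hF, Matrix.mul_assoc]
  have f3 : Acᴴ * (Xc * Bc) = Fcᴴ := by
    rw [hAc, hFc, mapCT, mapCT, hXcdef, hBc, ← mapMul, ← mapMul]
    congr 1
    rw [hF, Matrix.transpose_mul, Matrix.transpose_mul, Matrix.transpose_transpose, hXs]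
  have f4 : Bcᴴ * (Xc * Bc) = Gc := by
    rw [hBc, mapCT, hXcdef, hGcdef, ← mapMul, ← mapMul, Matrix.mul_assoc]
  have f1W : ∀ (p : ℕ) (W : Matrix (Fin n) (Fin p) ℂ), Acᴴ * (Xc * (Ac * W)) = Xc * W := by
    intro p W; rw [← Matrix.mul_assoc Xc, ← Matrix.mul_assoc Acᴴ, f1]
  have f2W : ∀ (p : ℕ) (W : Matrix (Fin n) (Fin p) ℂ), Bcᴴ * (Xc * (Ac * W)) = Fc * W := by
    intro p W; rw [← Matrix.mul_assoc Xc, ← Matrix.mul_assoc Bcᴴ, f2]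
  have f3W : ∀ (p : ℕ) (W : Matrix (Fin m) (Fin p) ℂ), Acᴴ * (Xc * (Bc * W)) = Fcᴴ * W := by
    intro p W; rw [← Matrix.mul_assoc Xc, ← Matrix.mul_assoc Acᴴ, f3]
  have f4W : ∀ (p : ℕ) (W : Matrix (Fin m) (Fin p) ℂ), Bcᴴ * (Xc * (Bc * W)) = Gc * W := by
    intro p W; rw [← Matrix.mul_assoc Xc, ← Matrix.mul_assoc Bcᴴ, f4]
  have hXcPD : Xc.PosDef := pdMap hX
  have hXcPSD : Xc.PosSemidef := hXcPD.posSemidef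
  have hS : ((1 : Matrix (Fin m) (Fin m) ℂ) - Gc).PosSemidef := by
    have h1 := psdMap hXB
    have e : ((1 : Matrix (Fin m) (Fin m) ℝ) - Bᵀ * X * B).map Complex.ofReal = 1 - Gc := by
      rw [hGcdef]
      ext i j
      by_cases h : i = j <;>
        simp [h, Matrix.map_apply, Matrix.sub_apply, Matrix.one_apply]
    rwa [e] at h1
  have hzz : (0 : ℂ) < star z * z - 1 := by
    rw [Complex.star_def, ← Complex.normSq_eq_conj_mul_self,
      show (1 : ℂ) = ((1 : ℝ) : ℂ) by norm_num, ← Complex.ofReal_sub, Complex.zero_lt_real]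
    have h1 : Complex.normSq z = ‖z‖ ^ 2 := by
      rw [← Complex.sq_norm]
    nlinarith [hz]
  have hK2 : (Ac - Bc * Fc)ᴴ * (Xc * (Ac - Bc * Fc))
      = Xc - Fcᴴ * Fc - Fcᴴ * (((1 : Matrix (Fin m) (Fin m) ℂ) - Gc) * Fc) := by
    simp only [Matrix.conjTranspose_sub, Matrix.conjTranspose_mul, Matrix.mul_sub,
      Matrix.sub_mul, Matrix.mul_one, Matrix.one_mul, Matrix.mul_assoc, f1, f2, f3, f4,
      f1W, f2W, f3W, f4W]
  set M : Matrix (Fin n) (Fin n) ℂ := z • (1 : Matrix (Fin n) (Fin n) ℂ) - Ac + Bc * Fc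
    with hMdef
  have hdet : IsUnit M.det := by
    rw [isUnit_iff_ne_zero]
    intro h0
    obtain ⟨v, hv, hMv⟩ := Matrix.exists_mulVec_eq_zero_iff.mpr h0
    have hv2 : (Ac - Bc * Fc) *ᵥ v = z • v := by
      have h1 : z • v - Ac *ᵥ v + (Bc * Fc) *ᵥ v = 0 := by
        rw [← hMv, hMdef]
        simp [Matrix.add_mulVec, Matrix.sub_mulVec, Matrix.smul_mulVec]
      have h2 : z • v + (Bc * Fc) *ᵥ v - Ac *ᵥ v = 0 := by rw [← h1]; abel
      have h3 := eq_of_sub_eq_zero h2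
      rw [Matrix.sub_mulVec, ← h3]
      abel
    set q : ℂ := star v ⬝ᵥ (Xc *ᵥ v) with hq
    set y : Fin m → ℂ := Fc *ᵥ v with hy
    have e1 : (star z * z) * q = star (z • v) ⬝ᵥ (Xc *ᵥ (z • v)) := by
      rw [Matrix.mulVec_smul, star_smul, smul_dotProduct, dotProduct_smul]
      simp only [smul_eq_mul, star_smul]
      ring
    have e2 : star (z • v) ⬝ᵥ (Xc *ᵥ (z • v))
        = star v ⬝ᵥ (((Ac - Bc * Fc)ᴴ * (Xc * (Ac - Bc * Fc))) *ᵥ v) := by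
      rw [← hv2]
      simp only [Matrix.star_mulVec, Matrix.dotProduct_mulVec, Matrix.vecMul_vecMul,
        Matrix.mul_assoc]
    have g1 : star v ⬝ᵥ ((Fcᴴ * Fc) *ᵥ v) = star y ⬝ᵥ y := by
      rw [hy]
      simp only [Matrix.star_mulVec, Matrix.dotProduct_mulVec, Matrix.vecMul_vecMul]
    have g2 : star v ⬝ᵥ ((Fcᴴ * (((1 : Matrix (Fin m) (Fin m) ℂ) - Gc) * Fc)) *ᵥ v)
        = star y ⬝ᵥ (((1 : Matrix (Fin m) (Fin m) ℂ) - Gc) *ᵥ y) := by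
      rw [hy]
      simp only [Matrix.star_mulVec, Matrix.dotProduct_mulVec, Matrix.vecMul_vecMul,
        Matrix.mul_assoc]
    have e3 : star v ⬝ᵥ (((Ac - Bc * Fc)ᴴ * (Xc * (Ac - Bc * Fc))) *ᵥ v)
        = q - star y ⬝ᵥ y - star y ⬝ᵥ (((1 : Matrix (Fin m) (Fin m) ℂ) - Gc) *ᵥ y) := by
      rw [hK2, Matrix.sub_mulVec, Matrix.sub_mulVec, dotProduct_sub, dotProduct_sub, g1, g2,
        hq]
    have hcomb := (e1.trans e2).trans e3
    have hpos : (0 : ℂ) < (star z * z - 1) * q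
        + (star y ⬝ᵥ y + star y ⬝ᵥ (((1 : Matrix (Fin m) (Fin m) ℂ) - Gc) *ᵥ y)) := by
      refine lt_of_lt_of_le (mul_pos hzz (hXcPD.dotProduct_mulVec_pos hv)) ?_
      refine le_add_of_nonneg_right (add_nonneg ?_ (hS.dotProduct_mulVec_nonneg y))
      exact Fintype.sum_nonneg fun i => star_mul_self_nonneg _
    have hzero : (star z * z - 1) * q
        + (star y ⬝ᵥ y + star y ⬝ᵥ (((1 : Matrix (Fin m) (Fin m) ℂ) - Gc) *ᵥ y)) = 0 := by
      linear_combination hcomb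
    rw [hzero] at hpos
    exact lt_irrefl 0 hpos
  refine ⟨(Matrix.isUnit_iff_isUnit_det _).mpr hdet, ?_⟩
  set N : Matrix (Fin n) (Fin m) ℂ := M⁻¹ * Bc with hNdef
  have hMN : M * N = Bc := by
    rw [hNdef, ← Matrix.mul_assoc, Matrix.mul_nonsing_inv _ hdet, Matrix.one_mul]
  have hP : Ac * N - Bc * (Fc * N) + Bc = z • N := by
    have h5 : z • N - Ac * N + Bc * (Fc * N) = Bc := by
      have h6 : M * N = z • N - Ac * N + Bc * (Fc * N) := by
        rw [hMdef, Matrix.add_mul, Matrix.sub_mul, Matrix.smul_mul, Matrix.one_mul,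
          Matrix.mul_assoc]
      rw [← h6, hMN]
    have h7 : z • N - (Ac * N - Bc * (Fc * N) + Bc) = 0 := by
      rw [show z • N - (Ac * N - Bc * (Fc * N) + Bc)
          = (z • N - Ac * N + Bc * (Fc * N)) - Bc from by abel, h5, sub_self]
    exact (sub_eq_zero.mp h7).symm
  have key : (star z * z) • (Nᴴ * (Xc * N)) =
      (Ac * N - Bc * (Fc * N) + Bc)ᴴ * (Xc * (Ac * N - Bc * (Fc * N) + Bc)) := by
    rw [hP, Matrix.conjTranspose_smul, Matrix.smul_mul, Matrix.mul_smul, Matrix.mul_smul,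
      smul_smul]
  have hIdent : (1 : Matrix (Fin m) (Fin m) ℂ) - (Fc * M⁻¹ * Bc)ᴴ * (Fc * M⁻¹ * Bc)
      = (star z * z - 1) • (Nᴴ * (Xc * N))
        + (Fc * N - 1)ᴴ * (((1 : Matrix (Fin m) (Fin m) ℂ) - Gc) * (Fc * N - 1)) := by
    have hT : Fc * M⁻¹ * Bc = Fc * N := by rw [hNdef, Matrix.mul_assoc]
    rw [hT, sub_smul, one_smul, key]
    simp only [Matrix.conjTranspose_sub, Matrix.conjTranspose_add, Matrix.conjTranspose_mul,
      Matrix.conjTranspose_one, Matrix.mul_sub, Matrix.sub_mul, Matrix.mul_add,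
      Matrix.add_mul, Matrix.mul_one, Matrix.one_mul, Matrix.mul_assoc, f1, f2, f3, f4,
      f1W, f2W, f3W, f4W]
    abel
  rw [hIdent]
  refine Matrix.PosSemidef.add (psdSmul ?_ (le_of_lt hzz)) ?_
  · have h6 := hXcPSD.conjTranspose_mul_mul_same N
    rwa [Matrix.mul_assoc] at h6
  · have h7 := hS.conjTranspose_mul_mul_same (Fc * N - 1)
    rwa [Matrix.mul_assoc] at h7
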